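/- Let C ⊆ E be a convex set and F a nonempty face of C. Then F is an exposed face of C if and only if there exists a point of ri(F) that is sharp exposed in C; moreover, if some point of ri(F) is sharp exposed in C, then every point of ri(F) is sharp exposed in C. -/

import Mathlib

open scoped Pointwise RealInnerProductSpace

variable {E : Type*} [NormedAddCommGroup E] [InnerProductSpace ℝ E] [FiniteDimensional ℝ E]

/-- `F` is a face of the convex set `C`: a convex subset of `C` such that whenever an open
segment between two points of `C` meets `F`, both endpoints belong to `F`. -/
def IsFace (C F : Set E) : Prop :=
  Convex ℝ F ∧ F ⊆ C ∧
    ∀ x ∈ C, ∀ y ∈ C, (openSegment ℝ x y ∩ F).Nonempty → x ∈ F ∧ y ∈ F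

/-- The exposed face `F⊥(C,u)` of `C` by the vector `u`: the points of `C` where `⟨u,·⟩`
attains its supremum over `C`. -/
def expFace (C : Set E) (u : E) : Set E :=
  {x ∈ C | ∀ y ∈ C, ⟪u, y⟫ ≤ ⟪u, x⟫}

/-- `F` is an exposed face of `C`: either `∅`, or `C`, or `F⊥(C,u)` for some nonzero `u`. -/
def IsExpFace (C F : Set E) : Prop :=
  F = ∅ ∨ F = C ∨ ∃ u : E, u ≠ 0 ∧ F = expFace C u

/-- The normal cone `N(C,x)` of `C` at the point `x`. -/
def normalCone (C : Set E) (x : E) : Set E :=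
  {u | ∀ y ∈ C, ⟪u, y - x⟫ ≤ 0}

/-- The normal cone `N(C,F)` of `C` at a subset `F`; for a nonempty convex `F ⊆ C` it agrees
with `normalCone C x` for any `x` in the relative interior of `F` (all these coincide), and
for `F = ∅` it is all of `E`. -/
def normalConeOf (C F : Set E) : Set E :=
  ⋂ x ∈ intrinsicInterior ℝ F, normalCone C x

/-- `N` is a normal cone of `C`: the normal cone of some face of `C`. -/
def IsNormalCone (C N : Set E) : Prop :=
  ∃ F, IsFace C F ∧ N = normalConeOf C F

/-- `T` is a touching cone of `C`: a nonempty face of a normal cone of `C`. -/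
def IsTouchingCone (C T : Set E) : Prop :=
  T.Nonempty ∧ ∃ N, IsNormalCone C N ∧ IsFace N T

/-- The positive hull of a set: all finite nonnegative combinations (`posHull ∅ = {0}`). -/
def posHull (S : Set E) : Set E :=
  {x | ∃ (k : ℕ) (c : Fin k → ℝ) (s : Fin k → E),
    (∀ i, 0 ≤ c i) ∧ (∀ i, s i ∈ S) ∧ x = ∑ i, c i • s i}

/-- A vector `u` is sharp normal for `C` if every `x ∈ ri(F⊥(C,u))` satisfies
`u ∈ ri(N(C,x))`. -/
def SharpNormal (C : Set E) (u : E) : Prop :=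
  ∀ x ∈ intrinsicInterior ℝ (expFace C u), u ∈ intrinsicInterior ℝ (normalCone C x)

/-- A point `x` is sharp exposed in `C` if every nonzero `u ∈ ri(N(C,x))` satisfies
`x ∈ ri(F⊥(C,u))`. -/
def SharpExposed (C : Set E) (x : E) : Prop :=
  ∀ u ∈ intrinsicInterior ℝ (normalCone C x), u ≠ 0 → x ∈ intrinsicInterior ℝ (expFace C u)

/-- The smallest exposed face of `C` containing `F`: the intersection of all exposed faces
of `C` containing `F`. -/
def supExp (C F : Set E) : Set E :=
  ⋂₀ {G | IsExpFace C G ∧ F ⊆ G}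

/-- The polar body of `K`. -/
def polarBody (K : Set E) : Set E := {u | ∀ y ∈ K, ⟪u, y⟫ ≤ 1}

section Aux

/-- Extension within a set from a relative interior point: if `x ∈ ri S` and `z ∈ S`, then
the segment from `z` through `x` can be prolonged a bit inside `ri S`. -/
private lemma extend_ri {S : Set E} {x z : E} (hx : x ∈ intrinsicInterior ℝ S) (hz : z ∈ S) :
    ∃ y ∈ intrinsicInterior ℝ S, x ∈ openSegment ℝ z y := by
  obtain ⟨x', hx', rfl⟩ := hx
  have hzspan : z ∈ affineSpan ℝ S := subset_affineSpan ℝ S hz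
  set g : ℝ → affineSpan ℝ S := fun t =>
    ⟨AffineMap.lineMap z (x' : E) t, AffineMap.lineMap_mem t hzspan x'.2⟩ with hg
  have hgc : Continuous g := by
    refine Continuous.subtype_mk ?_ _
    exact AffineMap.lineMap_continuous
  have hg1 : g 1 = x' := Subtype.ext (AffineMap.lineMap_apply_one z (x' : E))
  have hmem : g ⁻¹' (interior (((↑) : affineSpan ℝ S → E) ⁻¹' S)) ∈ nhds (1 : ℝ) :=
    (isOpen_interior.preimage hgc).mem_nhds (by rw [Set.mem_preimage, hg1]; exact hx')
  have hmem' : g ⁻¹' (interior (((↑) : affineSpan ℝ S → E) ⁻¹' S)) ∈ nhdsWithin (1 : ℝ) (Set.Ioi 1) :=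
    nhdsWithin_le_nhds hmem
  obtain ⟨t, htg, htI⟩ := Filter.nonempty_of_mem (Filter.inter_mem hmem' self_mem_nhdsWithin)
  have ht1 : (1 : ℝ) < t := htI
  have ht0 : (0 : ℝ) < t := lt_trans one_pos ht1
  refine ⟨g t, ⟨g t, htg, rfl⟩, ?_⟩
  refine ⟨1 - 1 / t, 1 / t, ?_, by positivity, by ring, ?_⟩
  · have : 1 / t < 1 := by
      rw [div_lt_one ht0]; exact ht1
    linarith
  · show (1 - 1 / t) • z + (1 / t) • ((g t : E)) = (x' : E)
    have hgt : (g t : E) = (1 - t) • z + t • (x' : E) := by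
      simp [hg, AffineMap.lineMap_apply_module]
    rw [hgt, smul_add, smul_smul, smul_smul, ← add_assoc, ← add_smul]
    have htne : t ≠ 0 := ne_of_gt ht0
    have h1 : (1 - 1 / t) + 1 / t * (1 - t) = 0 := by field_simp; ring
    have h2 : 1 / t * t = 1 := by field_simp
    rw [h1, h2, zero_smul, zero_add, one_smul]

private lemma expFace_isFace {C : Set E} (hC : Convex ℝ C) (u : E) :
    IsFace C (expFace C u) := by
  refine ⟨?_, fun y hy => hy.1, ?_⟩
  · intro p hp q hq a b ha hb hab
    refine ⟨hC hp.1 hq.1 ha hb hab, fun y hy => ?_⟩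
    have h1 := hp.2 y hy
    have h2 := hq.2 y hy
    rw [inner_add_right, real_inner_smul_right, real_inner_smul_right]
    have hsum : a * ⟪u, y⟫ + b * ⟪u, y⟫ = ⟪u, y⟫ := by rw [← add_mul, hab, one_mul]
    nlinarith [mul_le_mul_of_nonneg_left h1 ha, mul_le_mul_of_nonneg_left h2 hb]
  · rintro p hp q hq ⟨w, ⟨a, b, ha, hb, hab, habw⟩, hwF⟩
    have hpw := hwF.2 p hp
    have hqw := hwF.2 q hq
    have hw : ⟪u, w⟫ = a * ⟪u, p⟫ + b * ⟪u, q⟫ := by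
      rw [← habw, inner_add_right, real_inner_smul_right, real_inner_smul_right]
    have hpq : ⟪u, p⟫ = ⟪u, w⟫ ∧ ⟪u, q⟫ = ⟪u, w⟫ := by
      have hsw : a * ⟪u, w⟫ + b * ⟪u, w⟫ = ⟪u, w⟫ := by rw [← add_mul, hab, one_mul]
      constructor
      · refine le_antisymm hpw ?_
        nlinarith [mul_le_mul_of_nonneg_left hqw hb.le]
      · refine le_antisymm hqw ?_
        nlinarith [mul_le_mul_of_nonneg_left hpw ha.le]
    exact ⟨⟨hp, fun y hy => hpq.1 ▸ hwF.2 y hy⟩, ⟨hq, fun y hy => hpq.2 ▸ hwF.2 y hy⟩⟩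

private lemma isFace_self {C : Set E} (hC : Convex ℝ C) : IsFace C C :=
  ⟨hC, subset_rfl, fun x hx y hy _ => ⟨hx, hy⟩⟩

/-- A face is contained in any face containing one of its relative interior points. -/
private lemma face_subset_of_mem {C F G : Set E} (hF : IsFace C F) (hG : IsFace C G) {x : E}
    (hx : x ∈ intrinsicInterior ℝ F) (hxG : x ∈ G) : F ⊆ G := by
  intro z hz
  obtain ⟨y, hy, hseg⟩ := extend_ri hx hz
  exact (hG.2.2 z (hF.2.1 hz) y (hF.2.1 (intrinsicInterior_subset hy)) ⟨x, hseg, hxG⟩).1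

/-- Two faces sharing a common relative interior point are equal. -/
private lemma face_eq {C F G : Set E} (hF : IsFace C F) (hG : IsFace C G) {x : E}
    (hx : x ∈ intrinsicInterior ℝ F) (hxG : x ∈ intrinsicInterior ℝ G) : F = G :=
  subset_antisymm (face_subset_of_mem hF hG hx (intrinsicInterior_subset hxG))
    (face_subset_of_mem hG hF hxG (intrinsicInterior_subset hx))

private lemma normalCone_convex (C : Set E) (x : E) : Convex ℝ (normalCone C x) := by
  intro u hu v hv a b ha hb hab
  intro y hy
  have h1 := hu y hy
  have h2 := hv y hy
  rw [inner_add_left, real_inner_smul_left, real_inner_smul_left]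
  nlinarith

/-- If the normal cone at `x ∈ C` is trivial, then `x` is in the relative interior of `C`. -/
private lemma mem_ri_of_normalCone_eq_zero {C : Set E} (hC : Convex ℝ C) {x : E} (hx : x ∈ C)
    (hN : ∀ u ∈ normalCone C x, u = 0) : x ∈ intrinsicInterior ℝ C := by
  have hspan : affineSpan ℝ C = ⊤ := by
    rw [← AffineSubspace.direction_eq_top_iff_of_nonempty ⟨x, subset_affineSpan ℝ C hx⟩]
    by_contra hW
    have hbot : ((affineSpan ℝ C).direction)ᗮ ≠ ⊥ := fun h =>
      hW (Submodule.orthogonal_eq_bot_iff.1 h)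
    obtain ⟨u, huW, hune⟩ := Submodule.exists_mem_ne_zero_of_ne_bot hbot
    refine hune (hN u fun y hy => ?_)
    have hdir : y - x ∈ (affineSpan ℝ C).direction := by
      have := AffineSubspace.vsub_mem_direction (subset_affineSpan ℝ C hy)
        (subset_affineSpan ℝ C hx)
      simpa [vsub_eq_sub] using this
    have := (Submodule.mem_orthogonal _ u).1 huW (y - x) hdir
    rw [real_inner_comm] at this
    rw [this]
  have hint : (interior C).Nonempty := (hC.interior_nonempty_iff_affineSpan_eq_top).2 hspan
  suffices h : x ∈ interior C from interior_subset_intrinsicInterior h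
  by_contra hxint
  obtain ⟨f, hf⟩ := geometric_hahn_banach_open_point (hC.interior) isOpen_interior hxint
  set u : E := (InnerProductSpace.toDual ℝ E).symm f with hu
  have hinner : ∀ w : E, ⟪u, w⟫ = f w := fun w => InnerProductSpace.toDual_symm_apply
  obtain ⟨a, ha⟩ := hint
  have hu0 : u ≠ 0 := by
    intro h
    have h1 : f a < f x := hf a ha
    have h2 : f a = 0 := by rw [← hinner, h, inner_zero_left]
    have h3 : f x = 0 := by rw [← hinner, h, inner_zero_left]
    rw [h2, h3] at h1; exact lt_irrefl 0 h1
  refine hu0 (hN u fun y hy => ?_)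
  have hle : f y ≤ f x := by
    have key : ∀ t ∈ Set.Ioo (0 : ℝ) 1, f ((1 - t) • a + t • y) < f x := by
      intro t ht
      refine hf _ (hC.openSegment_interior_self_subset_interior ha hy
        ⟨1 - t, t, by linarith [ht.2], ht.1, by ring, rfl⟩)
    have hcont : Continuous fun t : ℝ => f ((1 - t) • a + t • y) := by continuity
    have htend : Filter.Tendsto (fun t : ℝ => f ((1 - t) • a + t • y))
        (nhdsWithin 1 (Set.Iio 1)) (nhds (f y)) := by
      have h1 := hcont.tendsto 1
      simpa using h1.mono_left nhdsWithin_le_nhds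
    refine le_of_tendsto htend ?_
    have hIoo : Set.Ioo (0 : ℝ) 1 ∈ nhdsWithin (1 : ℝ) (Set.Iio 1) :=
      Ioo_mem_nhdsLT_of_mem ⟨zero_lt_one, le_refl 1⟩
    exact Filter.eventually_of_mem hIoo fun t ht => (key t ht).le
  rw [inner_sub_right, hinner, hinner]
  linarith

/-- Every relative interior point of a nonempty exposed face is sharp exposed. -/
private lemma sharp_of_exposed {C F : Set E} (hC : Convex ℝ C) (hF : IsFace C F)
    (hExp : IsExpFace C F) : ∀ x ∈ intrinsicInterior ℝ F, SharpExposed C x := by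
  intro x hx u hu hu0
  have hxF : x ∈ F := intrinsicInterior_subset hx
  have hxC : x ∈ C := hF.2.1 hxF
  have huN : u ∈ normalCone C x := intrinsicInterior_subset hu
  have hxE : x ∈ expFace C u := by
    refine ⟨hxC, fun y hy => ?_⟩
    have := huN y hy
    rw [inner_sub_right] at this
    linarith
  have hFE : F ⊆ expFace C u := face_subset_of_mem hF (expFace_isFace hC u) hx hxE
  have hEF : expFace C u ⊆ F := by
    rcases hExp with h0 | hCC | ⟨u₀, _, hFu₀⟩
    · exact absurd hxF (h0 ▸ Set.notMem_empty x)
    · exact hCC ▸ fun y hy => hy.1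
    · have hxF' : x ∈ expFace C u₀ := hFu₀ ▸ hxF
      have hu₀N : u₀ ∈ normalCone C x := by
        intro y hy
        rw [inner_sub_right]
        linarith [hxF'.2 y hy]
      obtain ⟨w, hw, hseg⟩ := extend_ri hu hu₀N
      obtain ⟨a, b, ha, hb, hab, habu⟩ := hseg
      intro y hy
      have hyC : y ∈ C := hy.1
      have h1 : ⟪u, y - x⟫ = 0 := by
        rw [inner_sub_right]
        have hxy := hy.2 x hxC
        have hyx := hxE.2 y hyC
        linarith
      have h2 : ⟪w, y - x⟫ ≤ 0 := intrinsicInterior_subset hw y hyC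
      have h3 : ⟪u₀, y - x⟫ ≤ 0 := hu₀N y hyC
      have h4 : a * ⟪u₀, y - x⟫ + b * ⟪w, y - x⟫ = 0 := by
        rw [← real_inner_smul_left, ← real_inner_smul_left, ← inner_add_left, habu, h1]
      have h5' : 0 ≤ ⟪u₀, y - x⟫ := by
        nlinarith [mul_nonpos_of_nonneg_of_nonpos hb.le h2]
      have h5 : ⟪u₀, y - x⟫ = 0 := le_antisymm h3 h5'
      rw [inner_sub_right] at h5
      have hy₀ : y ∈ expFace C u₀ := by
        refine ⟨hyC, fun z hz => ?_⟩
        have := hxF'.2 z hz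
        linarith
      exact hFu₀ ▸ hy₀
  rw [show expFace C u = F from subset_antisymm hEF hFE]
  exact hx

/-- If some relative interior point of a face is sharp exposed, the face is exposed. -/
private lemma exposed_of_sharp {C F : Set E} (hC : Convex ℝ C) (hF : IsFace C F) {x : E}
    (hx : x ∈ intrinsicInterior ℝ F) (hsharp : SharpExposed C x) : IsExpFace C F := by
  have hxF : x ∈ F := intrinsicInterior_subset hx
  have hxC : x ∈ C := hF.2.1 hxF
  by_cases hN : ∃ u ∈ intrinsicInterior ℝ (normalCone C x), u ≠ 0
  · obtain ⟨u, hu, hu0⟩ := hN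
    have hxe := hsharp u hu hu0
    exact Or.inr (Or.inr ⟨u, hu0, face_eq hF (expFace_isFace hC u) hx hxe⟩)
  · push_neg at hN
    have h0N : (0 : E) ∈ normalCone C x := fun y hy => by simp
    obtain ⟨v, hv⟩ := Set.Nonempty.intrinsicInterior (normalCone_convex C x) ⟨0, h0N⟩
    have hv0 : v = 0 := hN v hv
    have hall : ∀ u ∈ normalCone C x, u = 0 := by
      intro u hu
      obtain ⟨w, hw, hseg⟩ := extend_ri (hv0 ▸ hv) hu
      have hw0 : w = 0 := hN w hw
      obtain ⟨a, b, ha, hb, hab, heq⟩ := hseg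
      rw [hw0, smul_zero, add_zero] at heq
      have := smul_eq_zero.1 heq
      rcases this with h | h
      · exact absurd h (ne_of_gt ha)
      · exact h
    have hxri : x ∈ intrinsicInterior ℝ C := mem_ri_of_normalCone_eq_zero hC hxC hall
    exact Or.inr (Or.inl (face_eq hF (isFace_self hC) hx hxri))

end Aux

/-- A nonempty face `F` of a convex set `C` is exposed iff some point of
`ri(F)` is sharp exposed in `C`; and if some point of `ri(F)` is sharp exposed then all
points of `ri(F)` are sharp exposed in `C`. -/
theorem stmt_12 (C : Set E) (hC : Convex ℝ C) (F : Set E) (hF : IsFace C F)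
    (hne : F.Nonempty) :
    (IsExpFace C F ↔ ∃ x ∈ intrinsicInterior ℝ F, SharpExposed C x) ∧
    ((∃ x ∈ intrinsicInterior ℝ F, SharpExposed C x) →
      ∀ x ∈ intrinsicInterior ℝ F, SharpExposed C x) := by
  constructor
  · constructor
    · intro hExp
      obtain ⟨x, hx⟩ := Set.Nonempty.intrinsicInterior hF.1 hne
      exact ⟨x, hx, sharp_of_exposed hC hF hExp x hx⟩
    · rintro ⟨x, hx, hsharp⟩
      exact exposed_of_sharp hC hF hx hsharp
  · rintro ⟨x, hx, hsharp⟩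
    exact sharp_of_exposed hC hF (exposed_of_sharp hC hF hx hsharp)
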